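/- Under strict preferences, Borda utilities (the k-th ranked of m items has utility m−k+1), and c copies of each item with n agents, any recursively balanced (in particular round-robin) sequential allocation in which each agent picks a most-preferred available item achieves total Borda welfare at least c·m·(m+1)/2, whereas the maximum possible total Borda welfare is at most c·m²; hence the sequential allocation is a 2-approximation to maximum Borda welfare. -/

import Mathlib

open Finset

/-- Sequential allocation with multiple copies of items: on each turn the agent picks a
most-preferred remaining item of which they do not already own a copy. -/
def seqValidM {A O : Type*} [DecidableEq A] [DecidableEq O] (u : A → O → ℝ) :
    List A → List O → Multiset O → (A → Finset O) → Prop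
  | [], [], _, _ => True
  | a :: s, o :: ps, rem, owned =>
      o ∈ rem ∧ o ∉ owned a ∧ (∀ o' ∈ rem, o' ∉ owned a → u a o' ≤ u a o) ∧
      seqValidM u s ps (rem.erase o) (Function.update owned a (insert o (owned a)))
  | _, _, _, _ => False

/-- A sequence of turns is recursively balanced if at every prefix the numbers of turns of
any two agents differ by at most one. -/
def RecBalanced11 {A : Type*} [DecidableEq A] (seq : List A) : Prop :=
  ∀ k : ℕ, ∀ i j : A, (seq.take k).count i ≤ (seq.take k).count j + 1

/-- Total welfare collected along a run. -/
noncomputable def runWelf11 {A O : Type*} (u : A → O → ℝ) (seq : List A) (picks : List O) : ℝ :=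
  ((seq.zip picks).map (fun x => u x.1 x.2)).sum

/-- Welfare of an allocation `f` assigning a set of items to each agent. -/
noncomputable def allocWelf11 {A O : Type*} [Fintype A] (u : A → O → ℝ) (f : A → Finset O) : ℝ :=
  ∑ a, ∑ o ∈ f a, u a o

lemma card_filter_prod {α β : Type*} [Fintype α] [Fintype β] (Q : α → β → Prop)
    [∀ a b, Decidable (Q a b)] :
    (univ.filter fun p : α × β => Q p.1 p.2).card = ∑ a, (univ.filter fun b => Q a b).card := by
  rw [Finset.card_filter, Fintype.sum_prod_type]
  exact Finset.sum_congr rfl fun a _ => (Finset.card_filter _ _).symm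

lemma rank_card {O : Type*} [Fintype O] [DecidableEq O] (e : O ≃ Fin (Fintype.card O)) (o : O) :
    (univ.filter fun o' => e o' < e o).card = (e o : ℕ) := by
  have h1 : (univ.filter fun o' => e o' < e o).card
      = (univ.filter fun j : Fin (Fintype.card O) => j < e o).card := by
    apply Finset.card_bij (fun o' _ => e o')
    · intro x hx; simp only [Finset.mem_filter, Finset.mem_univ, true_and] at hx ⊢; exact hx
    · intro x _ y _ hxy; exact e.injective hxy
    · intro j hj
      refine ⟨e.symm j, ?_, by simp⟩
      simp only [Finset.mem_filter, Finset.mem_univ, true_and, Equiv.apply_symm_apply] at hj ⊢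
      exact hj
  rw [h1]
  rw [show (univ.filter fun j : Fin (Fintype.card O) => j < e o) = Finset.Iio (e o) by
    ext j; simp]
  exact Fin.card_Iio (e o)

lemma part1_core {A O : Type*} [Fintype O] [DecidableEq A] [DecidableEq O]
    (c L : ℕ) (hc : 0 < c)
    (rnk : A → O ≃ Fin (Fintype.card O))
    (a_ : Fin L → A) (P_ : Fin L → O)
    (hfib : ∀ x : O, (univ.filter fun k : Fin L => P_ k = x).card = c)
    (hdist : ∀ j k : Fin L, j ≠ k → a_ j = a_ k → P_ j ≠ P_ k)
    (hgreedy : ∀ (k : Fin L) (o' : O), rnk (a_ k) o' < rnk (a_ k) (P_ k) →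
        (∃ j : Fin L, a_ j = a_ k ∧ P_ j = o') ∨ (∀ j : Fin L, (k : ℕ) ≤ (j : ℕ) → P_ j ≠ o')) :
    2 * (∑ k : Fin L, ((rnk (a_ k) (P_ k) : ℕ))) + c * Fintype.card O
      ≤ c * (Fintype.card O * Fintype.card O) := by
  classical
  have hmm : Fintype.card O = Fintype.card O := rfl
  -- last occurrence of each item
  have hfibne : ∀ x : O, (univ.filter fun k : Fin L => P_ k = x).Nonempty := by
    intro x; rw [← Finset.card_pos, hfib]; exact hc
  set lst : O → Fin L := fun x => ((univ.filter fun k : Fin L => P_ k = x).max' (hfibne x))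
    with hlstdef
  have hlst1 : ∀ x, P_ (lst x) = x := fun x =>
    (Finset.mem_filter.mp (Finset.max'_mem _ (hfibne x))).2
  have hlst2 : ∀ (x) (k : Fin L), P_ k = x → k ≤ lst x := by
    intro x k hk
    exact Finset.le_max' (univ.filter fun k : Fin L => P_ k = x) k
      (Finset.mem_filter.mpr ⟨Finset.mem_univ _, hk⟩)
  have hlstinj : ∀ x y, lst x = lst y → x = y := fun x y h => by
    rw [← hlst1 x, ← hlst1 y, h]
  set S : Finset (Fin L × O) :=
    univ.filter (fun p => rnk (a_ p.1) p.2 < rnk (a_ p.1) (P_ p.1)) with hSdef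
  set T : Finset (Fin L × O) :=
    univ.filter (fun p => lst p.2 < lst (P_ p.1)) with hTdef
  -- The injection S → T
  have hST : S.card ≤ T.card := by
    apply Finset.card_le_card_of_injOn
      (fun p => if h : ∃ j : Fin L, a_ j = a_ p.1 ∧ P_ j = p.2 ∧ lst (P_ p.1) < lst p.2
                then (h.choose, P_ p.1) else p)
    · -- maps to T
      intro p hp
      have hp' : rnk (a_ p.1) p.2 < rnk (a_ p.1) (P_ p.1) := by
        rw [hSdef] at hp; exact (Finset.mem_filter.mp hp).2
      by_cases h : ∃ j : Fin L, a_ j = a_ p.1 ∧ P_ j = p.2 ∧ lst (P_ p.1) < lst p.2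
      · dsimp only; rw [dif_pos h]
        obtain ⟨hja, hjp, hlt⟩ := h.choose_spec
        refine Finset.mem_filter.mpr ⟨Finset.mem_univ _, ?_⟩
        simpa [hjp] using hlt
      · dsimp only; rw [dif_neg h]
        refine Finset.mem_filter.mpr ⟨Finset.mem_univ _, ?_⟩
        have hne : p.2 ≠ P_ p.1 := by
          intro hEq; rw [hEq] at hp'; exact lt_irrefl _ hp'
        rcases hgreedy p.1 p.2 hp' with ⟨j, hja, hjp⟩ | hlate
        · have hnlt : ¬ lst (P_ p.1) < lst p.2 := fun hcon => h ⟨j, hja, hjp, hcon⟩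
          have hne2 : lst p.2 ≠ lst (P_ p.1) := fun hEq => hne (hlstinj _ _ hEq)
          exact lt_of_le_of_ne (not_lt.mp hnlt) hne2
        · have h1 : lst p.2 < p.1 := by
            by_contra hge
            exact hlate (lst p.2) (Fin.le_def.mp (not_lt.mp hge)) (hlst1 p.2)
          exact lt_of_lt_of_le h1 (hlst2 _ _ rfl)
    · -- injective on S
      intro p hp q hq heq
      have hp' : rnk (a_ p.1) p.2 < rnk (a_ p.1) (P_ p.1) := by
        rw [hSdef] at hp; exact (Finset.mem_filter.mp hp).2
      have hq' : rnk (a_ q.1) q.2 < rnk (a_ q.1) (P_ q.1) := by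
        rw [hSdef] at hq; exact (Finset.mem_filter.mp hq).2
      dsimp only at heq
      by_cases h1 : ∃ j : Fin L, a_ j = a_ p.1 ∧ P_ j = p.2 ∧ lst (P_ p.1) < lst p.2 <;>
        by_cases h2 : ∃ j : Fin L, a_ j = a_ q.1 ∧ P_ j = q.2 ∧ lst (P_ q.1) < lst q.2
      · rw [dif_pos h1, dif_pos h2] at heq
        obtain ⟨s1a, s1p, _⟩ := h1.choose_spec
        obtain ⟨s2a, s2p, _⟩ := h2.choose_spec
        have hjj : h1.choose = h2.choose := congrArg Prod.fst heq
        have hPP : P_ p.1 = P_ q.1 := congrArg Prod.snd heq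
        have haa : a_ p.1 = a_ q.1 := by rw [← s1a, hjj, s2a]
        have hoo : p.2 = q.2 := by rw [← s1p, hjj, s2p]
        have h11 : p.1 = q.1 := by
          by_contra hne
          exact hdist p.1 q.1 hne haa hPP
        exact Prod.ext h11 hoo
      · rw [dif_pos h1, dif_neg h2] at heq
        obtain ⟨s1a, s1p, _⟩ := h1.choose_spec
        exfalso
        have hq1 : q.1 = h1.choose := (congrArg Prod.fst heq).symm
        have hq2 : q.2 = P_ p.1 := (congrArg Prod.snd heq).symm
        rw [hq1, hq2, s1a, s1p] at hq'
        exact lt_asymm hp' hq'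
      · rw [dif_neg h1, dif_pos h2] at heq
        obtain ⟨s2a, s2p, _⟩ := h2.choose_spec
        exfalso
        have hp1 : p.1 = h2.choose := congrArg Prod.fst heq
        have hp2 : p.2 = P_ q.1 := congrArg Prod.snd heq
        rw [hp1, hp2, s2a, s2p] at hp'
        exact lt_asymm hp' hq'
      · rw [dif_neg h1, dif_neg h2] at heq
        exact heq
  -- card S = sum of ranks
  have cardS : ∑ k : Fin L, ((rnk (a_ k) (P_ k) : ℕ)) = S.card := by
    have h0 : S.card = ∑ k : Fin L, (univ.filter fun o' => rnk (a_ k) o' < rnk (a_ k) (P_ k)).card :=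
      card_filter_prod (fun (k : Fin L) (o' : O) => rnk (a_ k) o' < rnk (a_ k) (P_ k))
    rw [h0]
    exact Finset.sum_congr rfl fun k _ => (rank_card (rnk (a_ k)) (P_ k)).symm
  -- card T
  have cardT : T.card = ∑ k : Fin L, (univ.filter fun w => lst w < lst (P_ k)).card :=
    card_filter_prod (fun (k : Fin L) (w : O) => lst w < lst (P_ k))
  have hTg : T.card = c * ∑ x : O, (univ.filter fun w => lst w < lst x).card := by
    rw [cardT, ← Finset.sum_fiberwise univ P_
      (fun k => (univ.filter fun w => lst w < lst (P_ k)).card)]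
    rw [Finset.mul_sum]
    refine Finset.sum_congr rfl fun x _ => ?_
    have : ∀ k ∈ univ.filter fun k : Fin L => P_ k = x,
        (univ.filter fun w => lst w < lst (P_ k)).card
          = (univ.filter fun w => lst w < lst x).card := by
      intro k hk
      rw [(Finset.mem_filter.mp hk).2]
    rw [Finset.sum_congr rfl this, Finset.sum_const, hfib, smul_eq_mul]
  -- symmetric sums
  have hsym : ∑ x : O, (univ.filter fun w => lst w < lst x).card
      = ∑ x : O, (univ.filter fun w => lst x < lst w).card := by
    have e1 := card_filter_prod (fun x w : O => lst w < lst x)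
    have e2 := card_filter_prod (fun x w : O => lst x < lst w)
    rw [← e1, ← e2]
    apply Finset.card_bij (fun p _ => (p.2, p.1))
    · intro p hp
      simp only [Finset.mem_filter, Finset.mem_univ, true_and] at hp ⊢
      exact hp
    · intro p _ q _ h
      have h1 : p.2 = q.2 := congrArg Prod.fst h
      have h2 : p.1 = q.1 := congrArg Prod.snd h
      exact Prod.ext h2 h1
    · intro p hp
      simp only [Finset.mem_filter, Finset.mem_univ, true_and] at hp ⊢
      exact ⟨(p.2, p.1), hp, rfl⟩
  -- trichotomy
  have htri : ∀ x : O, (univ.filter fun w => lst w < lst x).card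
      + (univ.filter fun w => lst x < lst w).card + 1 = Fintype.card O := by
    intro x
    have heqf : (univ.filter fun w : O => lst w = lst x) = {x} := by
      ext w
      simp only [Finset.mem_filter, Finset.mem_univ, true_and, Finset.mem_singleton]
      exact ⟨fun h => hlstinj _ _ h, fun h => by rw [h]⟩
    have hd1 : Disjoint (univ.filter fun w : O => lst x < lst w)
        (univ.filter fun w : O => lst w = lst x) := by
      rw [Finset.disjoint_left]
      intro w h1 h2
      simp only [Finset.mem_filter, Finset.mem_univ, true_and] at h1 h2
      rw [h2] at h1
      exact lt_irrefl _ h1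
    have hd2 : Disjoint (univ.filter fun w : O => lst w < lst x)
        ((univ.filter fun w : O => lst x < lst w) ∪ (univ.filter fun w : O => lst w = lst x)) := by
      rw [Finset.disjoint_left]
      intro w h1 h2
      simp only [Finset.mem_union, Finset.mem_filter, Finset.mem_univ, true_and] at h1 h2
      rcases h2 with h2 | h2
      · exact lt_asymm h1 h2
      · rw [h2] at h1; exact lt_irrefl _ h1
    have hU : (univ.filter fun w : O => lst w < lst x)
        ∪ ((univ.filter fun w : O => lst x < lst w) ∪ (univ.filter fun w : O => lst w = lst x))
        = univ := by
      ext w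
      simp only [Finset.mem_union, Finset.mem_filter, Finset.mem_univ, true_and, iff_true]
      rcases lt_trichotomy (lst w) (lst x) with h | h | h
      · exact Or.inl h
      · exact Or.inr (Or.inr h)
      · exact Or.inr (Or.inl h)
    have := Finset.card_union_of_disjoint hd2
    rw [hU, Finset.card_union_of_disjoint hd1, heqf, Finset.card_singleton,
      Finset.card_univ] at this
    omega
  -- assemble
  have h2T : 2 * (∑ x : O, (univ.filter fun w => lst w < lst x).card) + Fintype.card O = Fintype.card O * Fintype.card O := by
    have hsum : ∑ x : O, ((univ.filter fun w => lst w < lst x).card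
        + (univ.filter fun w => lst x < lst w).card + 1) = Fintype.card O * Fintype.card O := by
      rw [Finset.sum_congr rfl fun x _ => htri x, Finset.sum_const, Finset.card_univ,
        smul_eq_mul]
    rw [Finset.sum_add_distrib, Finset.sum_add_distrib, Finset.sum_const, Finset.card_univ,
      smul_eq_mul, mul_one, ← hsym] at hsum
    omega
  calc 2 * (∑ k : Fin L, ((rnk (a_ k) (P_ k) : ℕ))) + c * Fintype.card O
      = 2 * S.card + c * Fintype.card O := by rw [cardS]
    _ ≤ 2 * T.card + c * Fintype.card O := by omega
    _ = c * (2 * (∑ x : O, (univ.filter fun w => lst w < lst x).card)) + c * Fintype.card O := by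
        rw [hTg]; ring
    _ = c * (2 * (∑ x : O, (univ.filter fun w => lst w < lst x).card) + Fintype.card O) := by ring
    _ = c * (Fintype.card O * Fintype.card O) := by rw [h2T]

lemma seqValidM_facts {A O : Type*} [DecidableEq A] [DecidableEq O] (u : A → O → ℝ) :
    ∀ (s : List A) (ps : List O) (rem : Multiset O) (owned : A → Finset O),
    seqValidM u s ps rem owned →
    ps.length = s.length ∧ ((ps : Multiset O) ≤ rem) ∧
    (∀ (k : ℕ) (hk : k < ps.length) (hk' : k < s.length),
       ps[k] ∉ owned s[k]) ∧
    (∀ (j k : ℕ) (hj : j < ps.length) (hj' : j < s.length)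
       (hk : k < ps.length) (hk' : k < s.length),
       j < k → s[j] = s[k] → ps[j] ≠ ps[k]) ∧
    (∀ (k : ℕ) (hk : k < ps.length) (hk' : k < s.length) (o' : O),
       u s[k] ps[k] < u s[k] o' →
       o' ∈ owned s[k] ∨
       (∃ j, ∃ (hj : j < ps.length) (hj' : j < s.length),
          j < k ∧ s[j] = s[k] ∧ ps[j] = o') ∨
       (ps.take k).count o' = rem.count o') := by
  intro s
  induction s with
  | nil =>
    intro ps rem owned h
    cases ps with
    | nil =>
      exact ⟨rfl, by simp, fun k hk _ => absurd hk (by simp),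
        fun j k hj _ _ _ _ _ => absurd hj (by simp), fun k hk _ o' _ => absurd hk (by simp)⟩
    | cons o ps => simp [seqValidM] at h
  | cons a s ih =>
    intro ps rem owned h
    cases ps with
    | nil => simp [seqValidM] at h
    | cons o ps =>
      rw [seqValidM] at h
      obtain ⟨hmem, hnotown, hgreedy, htail⟩ := h
      obtain ⟨ih1, ih2, ih3, ih4, ih5⟩ := ih ps (rem.erase o) _ htail
      refine ⟨by simp [ih1], ?_, ?_, ?_, ?_⟩
      · -- multiset
        have : ((o :: ps : List O) : Multiset O) = o ::ₘ (ps : Multiset O) := by simp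
        rw [this, ← Multiset.cons_erase hmem]
        exact Multiset.cons_le_cons o ih2
      · -- ownership
        intro k hk hk'
        match k with
        | 0 => simpa using hnotown
        | Nat.succ n =>
          simp only [List.getElem_cons_succ]
          have hn : n < ps.length := by simpa using hk
          have hn' : n < s.length := by simpa using hk'
          have h3 := ih3 n hn hn'
          by_cases hsa : s[n] = a
          · rw [hsa, Function.update_self] at h3
            rw [hsa]
            exact fun hx => h3 (Finset.mem_insert_of_mem hx)
          · rwa [Function.update_of_ne hsa] at h3
      · -- distinctness
        intro j k hj hj' hk hk' hjk heq
        match j, k with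
        | _, 0 => omega
        | 0, Nat.succ n =>
          simp only [List.getElem_cons_zero, List.getElem_cons_succ] at heq ⊢
          have hn : n < ps.length := by simpa using hk
          have hn' : n < s.length := by simpa using hk'
          have h3 := ih3 n hn hn'
          rw [← heq, Function.update_self] at h3
          exact fun hx => h3 (hx ▸ Finset.mem_insert_self o _)
        | Nat.succ i, Nat.succ n =>
          simp only [List.getElem_cons_succ] at heq ⊢
          exact ih4 i n (by simpa using hj) (by simpa using hj') (by simpa using hk)
            (by simpa using hk') (by omega) heq
      · -- greedy
        intro k hk hk' o' hlt
        match k with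
        | 0 =>
          simp only [List.getElem_cons_zero] at hlt ⊢
          by_cases ho' : o' ∈ owned a
          · exact Or.inl ho'
          · by_cases hrem : o' ∈ rem
            · exact absurd (hgreedy o' hrem ho') (by linarith)
            · refine Or.inr (Or.inr ?_)
              simp [Multiset.count_eq_zero_of_notMem hrem]
        | Nat.succ n =>
          simp only [List.getElem_cons_succ] at hlt ⊢
          have hn : n < ps.length := by simpa using hk
          have hn' : n < s.length := by simpa using hk'
          rcases ih5 n hn hn' o' hlt with hcase | ⟨j, hj, hj', hjn, hsame, hpick⟩ | hcount
          · by_cases hsa : s[n] = a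
            · rw [hsa, Function.update_self] at hcase
              rcases Finset.mem_insert.mp hcase with rfl | how
              · refine Or.inr (Or.inl ⟨0, by simp, by simp, Nat.succ_pos n, ?_, by simp⟩)
                simpa using hsa.symm
              · left; rw [hsa]; exact how
            · rw [Function.update_of_ne hsa] at hcase
              exact Or.inl hcase
          · refine Or.inr (Or.inl ⟨j + 1, by simpa using hj, by simpa using hj',
              by omega, by simpa using hsame, by simpa using hpick⟩)
          · refine Or.inr (Or.inr ?_)
            rw [List.take_succ_cons]
            by_cases ho : o' = o
            · subst ho
              have hpos : 0 < rem.count o' := Multiset.count_pos.mpr hmem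
              have : (rem.erase o').count o' = rem.count o' - 1 := Multiset.count_erase_self o' rem
              simp only [List.count_cons_self]
              omega
            · have hco : (rem.erase o).count o' = rem.count o' := Multiset.count_erase_of_ne ho rem
              simp [List.count_cons, ho, Ne.symm ho, hcount, hco]

/-- With strict preferences, Borda utilities (the `k`-th ranked of `m` items has utility
`m - k + 1`) and `c` copies of each item, any recursively balanced sequential allocation
achieves Borda welfare at least `c·m·(m+1)/2`, while any feasible allocation has welfare at
most `c·m²`; hence the sequential allocation is a 2-approximation of maximum Borda welfare. -/
theorem stmt11 {A O : Type*} [Fintype A] [Fintype O] [DecidableEq A] [DecidableEq O]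
    (c : ℕ) (hc : 0 < c)
    (rnk : A → O ≃ Fin (Fintype.card O))
    (u : A → O → ℝ) (hu : ∀ a o, u a o = (Fintype.card O : ℝ) - (rnk a o : ℕ))
    (seq : List A) (hRB : RecBalanced11 seq)
    (hlen : seq.length = c * Fintype.card O)
    (picks : List O)
    (hvalid : seqValidM u seq picks (c • (Finset.univ.val : Multiset O)) (fun _ => ∅)) :
    ((c : ℝ) * Fintype.card O * (Fintype.card O + 1)) / 2 ≤ runWelf11 u seq picks ∧
    (∀ f : A → Finset O,
      (∀ o : O, (Finset.univ.filter fun a => o ∈ f a).card ≤ c) →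
        allocWelf11 u f ≤ (c : ℝ) * (Fintype.card O) ^ 2) ∧
    (∀ f : A → Finset O,
      (∀ o : O, (Finset.univ.filter fun a => o ∈ f a).card ≤ c) →
        allocWelf11 u f ≤ 2 * runWelf11 u seq picks) := by
  classical
  obtain ⟨e, hle, hown, hdist0, hgre0⟩ :=
    seqValidM_facts u seq picks (c • (Finset.univ.val : Multiset O)) (fun _ => ∅) hvalid
  have hlenp : picks.length = c * Fintype.card O := by rw [e, hlen]
  have hps : (picks : Multiset O) = c • (Finset.univ.val : Multiset O) := by
    apply Multiset.eq_of_le_of_card_le hle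
    simpa using le_of_eq hlenp.symm
  have hcnt : ∀ x : O, picks.count x = c := by
    intro x
    have h1 : Multiset.count x (picks : Multiset O) = c := by rw [hps]; simp
    simpa using h1
  -- the pick functions
  set L := picks.length with hL
  set a_ : Fin L → A := fun k => seq[(k : ℕ)]'(e ▸ k.2) with ha
  set P_ : Fin L → O := fun k => picks[(k : ℕ)]'(k.2) with hP
  -- fibers
  have hlist : picks = (List.finRange L).map (fun k => P_ k) := by
    rw [hP]
    exact (List.map_get_finRange picks).symm
  have hfib : ∀ x : O, (univ.filter fun k : Fin L => P_ k = x).card = c := by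
    intro x
    have h1 : (picks : Multiset O) = Multiset.map P_ (univ : Finset (Fin L)).val := by
      conv_lhs => rw [hlist]
      simp [Fin.univ_def]
    have h2 : Multiset.count x (picks : Multiset O)
        = Multiset.card (((univ : Finset (Fin L)).val).filter (fun k => x = P_ k)) := by
      rw [h1]; exact Multiset.count_map _ _ _
    have h3 : (((univ : Finset (Fin L)).val).filter (fun k => x = P_ k))
        = (((univ : Finset (Fin L)).val).filter (fun k => P_ k = x)) :=
      Multiset.filter_congr (fun k _ => eq_comm)
    have h4 : Multiset.count x (picks : Multiset O) = c := by
      have := hcnt x; simpa using this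
    rw [h2, h3] at h4
    exact h4
  -- distinctness
  have hdist : ∀ j k : Fin L, j ≠ k → a_ j = a_ k → P_ j ≠ P_ k := by
    intro j k hne heq
    rcases Nat.lt_or_ge (j : ℕ) (k : ℕ) with h | h
    · exact hdist0 j k j.2 (e ▸ j.2) k.2 (e ▸ k.2) h heq
    · have hlt : (k : ℕ) < (j : ℕ) := by
        rcases Nat.eq_or_lt_of_le h with h2 | h2
        · exact absurd (Fin.ext h2.symm) hne
        · exact h2
      exact (hdist0 k j k.2 (e ▸ k.2) j.2 (e ▸ j.2) hlt heq.symm).symm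
  -- greedy
  have hgreedy : ∀ (k : Fin L) (o' : O), rnk (a_ k) o' < rnk (a_ k) (P_ k) →
      (∃ j : Fin L, a_ j = a_ k ∧ P_ j = o') ∨ (∀ j : Fin L, (k : ℕ) ≤ (j : ℕ) → P_ j ≠ o') := by
    intro k o' hr
    have hult : u (a_ k) (P_ k) < u (a_ k) o' := by
      rw [hu, hu]
      have : ((rnk (a_ k) o' : ℕ) : ℝ) < ((rnk (a_ k) (P_ k) : ℕ) : ℝ) := by
        exact_mod_cast hr
      linarith
    rcases hgre0 k k.2 (e ▸ k.2) o' hult with hemp | ⟨j, hj, hj', hjk, hsame, hpick⟩ | hcount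
    · simp at hemp
    · exact Or.inl ⟨⟨j, hj⟩, hsame, hpick⟩
    · right
      intro j hkj hPj
      have hcc : (picks.take (k : ℕ)).count o' = c := by
        rw [hcount]; simp
      have hsplit : picks.count o' = (picks.take (k : ℕ)).count o' + (picks.drop (k : ℕ)).count o' := by
        conv_lhs => rw [← List.take_append_drop (k : ℕ) picks]
        exact List.count_append
      have hd0 : (picks.drop (k : ℕ)).count o' = 0 := by
        have := hcnt o'; omega
      have hnotin : o' ∉ picks.drop (k : ℕ) := by
        rw [← List.count_eq_zero]
        exact hd0
      apply hnotin
      have hjlen : (j : ℕ) - (k : ℕ) < (picks.drop (k : ℕ)).length := by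
        rw [List.length_drop]; have := j.2; omega
      have hgd : (picks.drop (k : ℕ))[(j : ℕ) - (k : ℕ)]'hjlen
          = picks[(k : ℕ) + ((j : ℕ) - (k : ℕ))]'(by have := j.2; omega) := by
        simp [List.getElem_drop]
      have hidx : (k : ℕ) + ((j : ℕ) - (k : ℕ)) = (j : ℕ) := by omega
      have hval : picks[(k : ℕ) + ((j : ℕ) - (k : ℕ))]'(by have := j.2; omega) = o' := by
        simp only [hidx]
        exact hPj
      rw [← hval, ← hgd]
      exact List.getElem_mem hjlen
  have hcore := part1_core c L hc rnk a_ P_ hfib hdist hgreedy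
  -- welfare identity
  have hrw : runWelf11 u seq picks = ∑ k : Fin L, u (a_ k) (P_ k) := by
    rw [runWelf11, Fin.sum_univ_def]
    congr 1
    apply List.ext_getElem
    · simp only [List.length_map, List.length_zip, List.length_finRange]
      omega
    · intro i h1 h2
      simp only [List.getElem_map, List.getElem_zip, List.getElem_finRange, Fin.cast, ha, hP]
  have part1 : ((c : ℝ) * Fintype.card O * (Fintype.card O + 1)) / 2 ≤ runWelf11 u seq picks := by
    rw [div_le_iff₀ (by norm_num : (0:ℝ) < 2)]
    have hsumval : runWelf11 u seq picks
        = (c : ℝ) * Fintype.card O * Fintype.card O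
          - ((∑ k : Fin L, ((rnk (a_ k) (P_ k) : ℕ)) : ℕ) : ℝ) := by
      rw [hrw, Finset.sum_congr rfl (fun k _ => hu (a_ k) (P_ k)), Finset.sum_sub_distrib,
        Finset.sum_const, Finset.card_univ, Fintype.card_fin, nsmul_eq_mul]
      have hLr : ((L : ℕ) : ℝ) = (c : ℝ) * (Fintype.card O : ℝ) := by exact_mod_cast hlenp
      rw [hLr]
      push_cast
      ring
    have hc2 : 2 * ((∑ k : Fin L, ((rnk (a_ k) (P_ k) : ℕ)) : ℕ) : ℝ)
        + (c : ℝ) * Fintype.card O ≤ (c : ℝ) * (Fintype.card O * Fintype.card O) := by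
      exact_mod_cast hcore
    rw [hsumval]
    ring_nf
    ring_nf at hc2
    linarith
  have part2 : ∀ f : A → Finset O,
      (∀ o : O, (Finset.univ.filter fun a => o ∈ f a).card ≤ c) →
        allocWelf11 u f ≤ (c : ℝ) * (Fintype.card O) ^ 2 := by
    intro f hf
    have hub : ∀ (a : A) (o : O), u a o ≤ Fintype.card O := by
      intro a o
      rw [hu]
      have : (0 : ℝ) ≤ ((rnk a o : ℕ) : ℝ) := Nat.cast_nonneg _
      linarith
    have hcards : (∑ a, (f a).card) ≤ Fintype.card O * c := by
      have hdc : ∑ a, (f a).card = ∑ o, (Finset.univ.filter fun a => o ∈ f a).card := by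
        have h1 : ∀ a : A, (f a).card = ∑ o : O, if o ∈ f a then 1 else 0 := by
          intro a
          rw [← Finset.card_filter]
          congr 1
          exact (Finset.filter_univ_mem (f a)).symm
        rw [Finset.sum_congr rfl fun a _ => h1 a, Finset.sum_comm]
        refine Finset.sum_congr rfl fun o _ => ?_
        rw [Finset.card_filter]
      rw [hdc]
      calc ∑ o, (Finset.univ.filter fun a => o ∈ f a).card ≤ ∑ _o : O, c :=
            Finset.sum_le_sum fun o _ => hf o
        _ = Fintype.card O * c := by rw [Finset.sum_const, Finset.card_univ, smul_eq_mul]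
    calc allocWelf11 u f ≤ ∑ a, ∑ _o ∈ f a, (Fintype.card O : ℝ) := by
          rw [allocWelf11]
          exact Finset.sum_le_sum fun a _ => Finset.sum_le_sum fun o _ => hub a o
      _ = ∑ a, ((f a).card : ℝ) * Fintype.card O := by
          refine Finset.sum_congr rfl fun a _ => ?_
          rw [Finset.sum_const, nsmul_eq_mul]
      _ = ((∑ a, (f a).card : ℕ) : ℝ) * Fintype.card O := by
          push_cast
          rw [Finset.sum_mul]
      _ ≤ ((Fintype.card O * c : ℕ) : ℝ) * Fintype.card O := by
          have h0 : (0:ℝ) ≤ (Fintype.card O : ℝ) := Nat.cast_nonneg _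
          exact mul_le_mul_of_nonneg_right (Nat.cast_le.mpr hcards) h0
      _ = (c : ℝ) * (Fintype.card O) ^ 2 := by push_cast; ring
  refine ⟨part1, part2, ?_⟩
  intro f hf
  have h2 := part2 f hf
  have h3 : (c : ℝ) * (Fintype.card O) ^ 2 ≤ 2 * runWelf11 u seq picks := by
    have h4 : (c : ℝ) * Fintype.card O * (Fintype.card O + 1) ≤ 2 * runWelf11 u seq picks := by
      have := part1
      rw [div_le_iff₀ (by norm_num : (0:ℝ) < 2)] at this
      linarith
    have h5 : (c : ℝ) * (Fintype.card O) ^ 2 ≤ (c : ℝ) * Fintype.card O * (Fintype.card O + 1) := by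
      have h6 : (0:ℝ) ≤ (c : ℝ) * Fintype.card O := by positivity
      nlinarith
    linarith
  linarith
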